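/- The single-mode KMB scalar curvature Scal(ν) = -[(2ν - f(ν) + 4ν² f(ν))(f(ν) + 2ν(-1 + 6ν f(ν)))] / [8ν²(4ν² - 1) f(ν)²], with f(ν) = arccoth(2ν), tends to -2 as ν → ∞. -/

import Mathlib

open Filter Real Topology

/-- `arccoth y = (1/2) ln((y+1)/(y-1))`. -/
noncomputable def arccoth (x : ℝ) : ℝ := (1/2) * Real.log ((x + 1) / (x - 1))

/-- The single-mode KMB scalar curvature
`Scal(ν) = -[(2ν - f(ν) + 4ν² f(ν))(f(ν) + 2ν(-1 + 6ν f(ν)))] / [8ν²(4ν² - 1) f(ν)²]`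
with `f(ν) = arccoth(2ν)`. -/
noncomputable def Scal1 (ν : ℝ) : ℝ :=
  -((2*ν - arccoth (2*ν) + 4*ν^2 * arccoth (2*ν))
      * (arccoth (2*ν) + 2*ν*(-1 + 6*ν*arccoth (2*ν))))
    / (8*ν^2*(4*ν^2 - 1) * (arccoth (2*ν))^2)

lemma arccoth_eq (ν : ℝ) (hν : (1:ℝ) ≤ ν) :
    arccoth (2*ν) = (1/2) * Real.log (1 + 2/(2*ν - 1)) := by
  have h1 : (2*ν - 1) ≠ 0 := by nlinarith
  have : (2*ν + 1)/(2*ν - 1) = 1 + 2/(2*ν - 1) := by field_simp; ring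
  rw [arccoth, this]

lemma u_tendsto : Tendsto (fun ν : ℝ => 2*ν*arccoth (2*ν)) atTop (𝓝 1) := by
  have hshift : Tendsto (fun ν : ℝ => 2*ν - 1) atTop atTop := by
    apply tendsto_atTop_add_const_right
    exact (tendsto_id.const_mul_atTop (by norm_num : (0:ℝ) < 2))
  have h1 : Tendsto (fun ν : ℝ => (2*ν - 1) * Real.log (1 + 2/(2*ν - 1))) atTop (𝓝 2) :=
    (Real.tendsto_mul_log_one_add_div_atTop 2).comp hshift
  have h2 : Tendsto (fun ν : ℝ => Real.log (1 + 2/(2*ν - 1))) atTop (𝓝 0) := by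
    have : Tendsto (fun ν : ℝ => 1 + 2/(2*ν - 1)) atTop (𝓝 1) := by
      simpa using tendsto_const_nhds.add (hshift.const_div_atTop 2)
    simpa [Function.comp_def] using ((Real.continuousAt_log (by norm_num)).tendsto.comp this)
  have key : Tendsto (fun ν : ℝ => ((2*ν - 1) * Real.log (1 + 2/(2*ν - 1))
      + Real.log (1 + 2/(2*ν - 1))) / 2) atTop (𝓝 1) := by
    have := (h1.add h2).div_const 2
    norm_num at this
    exact this
  refine key.congr' ?_
  filter_upwards [eventually_ge_atTop (1:ℝ)] with ν hν
  rw [arccoth_eq ν hν]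
  ring

/-- The single-mode scalar curvature tends to `-2` as `ν → ∞`. -/
theorem scal1_tendsto_atTop : Filter.Tendsto Scal1 Filter.atTop (nhds (-2)) := by
  have hu := u_tendsto
  have hsq : Tendsto (fun ν : ℝ => 4*ν^2) atTop atTop :=
    Filter.Tendsto.const_mul_atTop (by norm_num)
      (tendsto_pow_atTop (by norm_num : (2:ℕ) ≠ 0))
  have hδ : Tendsto (fun ν : ℝ => 1/(4*ν^2)) atTop (𝓝 0) := hsq.const_div_atTop 1
  have he : Tendsto (fun ν : ℝ => (2*ν*arccoth (2*ν))/(4*ν^2)) atTop (𝓝 0) :=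
    hu.div_atTop hsq
  have hT : Tendsto (fun ν : ℝ =>
      -(((1 + 2*ν*arccoth (2*ν) - (2*ν*arccoth (2*ν))/(4*ν^2))
        * (3*(2*ν*arccoth (2*ν)) - 1 + (2*ν*arccoth (2*ν))/(4*ν^2)))
        / (2*(1 - 1/(4*ν^2)) * (2*ν*arccoth (2*ν))^2))) atTop (𝓝 (-2)) := by
    have hnum : Tendsto (fun ν : ℝ =>
        (1 + 2*ν*arccoth (2*ν) - (2*ν*arccoth (2*ν))/(4*ν^2))
        * (3*(2*ν*arccoth (2*ν)) - 1 + (2*ν*arccoth (2*ν))/(4*ν^2)))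
        atTop (𝓝 ((1 + 1 - 0) * (3*1 - 1 + 0))) :=
      ((tendsto_const_nhds.add hu).sub he).mul
        (((hu.const_mul 3).sub tendsto_const_nhds).add he)
    have hden : Tendsto (fun ν : ℝ => 2*(1 - 1/(4*ν^2)) * (2*ν*arccoth (2*ν))^2)
        atTop (𝓝 (2*(1 - 0) * 1^2)) :=
      (((tendsto_const_nhds.sub hδ).const_mul 2)).mul (hu.pow 2)
    have hval : (-2:ℝ) = -(((1:ℝ) + 1 - 0) * (3*1 - 1 + 0) / (2*((1:ℝ) - 0) * 1^2)) := by
      norm_num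
    rw [hval]
    exact (hnum.div hden (by norm_num)).neg
  refine hT.congr' ?_
  filter_upwards [eventually_ge_atTop (1:ℝ)] with ν hν
  have hν0 : ν ≠ 0 := by nlinarith
  have hf : arccoth (2*ν) > 0 := by
    rw [arccoth]
    have h1 : (0:ℝ) < 2*ν - 1 := by nlinarith
    have h2 : (1:ℝ) < (2*ν + 1)/(2*ν - 1) := by
      rw [lt_div_iff₀ h1]; linarith
    have hl := Real.log_pos h2; linarith
  have hf0 : arccoth (2*ν) ≠ 0 := ne_of_gt hf
  have h41 : (4*ν^2 - 1 : ℝ) ≠ 0 := by nlinarith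
  rw [Scal1]
  field_simp
  ring
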